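/- There exists n₀ = n₀(k,t) such that for all n ≥ n₀, every t-intersecting family F of k-multisets of [n] satisfies |F| ≤ binomial(n+k−t−1, k−t). -/

import Mathlib

open Finset

def tupleEquivSym (n m : ℕ) : {f : Fin n → ℕ // ∑ i, f i = m} ≃ Sym (Fin n) m where
  toFun f := ⟨∑ i, Multiset.replicate (f.1 i) i, by
    simp [f.2]⟩
  invFun s := ⟨fun i => Multiset.count i s.1, by
    have h1 : ∑ i ∈ s.1.toFinset, Multiset.count i s.1 = Multiset.card s.1 :=
      Multiset.toFinset_sum_count_eq s.1
    have h2 : ∑ i : Fin n, Multiset.count i s.1 = ∑ i ∈ s.1.toFinset, Multiset.count i s.1 := by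
      refine (Finset.sum_subset (Finset.subset_univ _) ?_).symm
      intro x _ hx
      simpa [Multiset.count_eq_zero] using fun h => hx (Multiset.mem_toFinset.2 h)
    rw [h2, h1, s.2]⟩
  left_inv f := by
    ext i
    simp only
    rw [Multiset.count_sum']
    simp [Multiset.count_replicate, Finset.sum_ite_eq]
  right_inv s := by
    apply Subtype.ext
    show (∑ i : Fin n, Multiset.replicate (Multiset.count i s.1) i) = s.1
    have h2 : ∑ i : Fin n, Multiset.replicate (Multiset.count i s.1) i
        = ∑ i ∈ s.1.toFinset, Multiset.replicate (Multiset.count i s.1) i := by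
      refine (Finset.sum_subset (Finset.subset_univ _) ?_).symm
      intro x _ hx
      have : Multiset.count x s.1 = 0 := by
        simpa [Multiset.count_eq_zero] using fun h => hx (Multiset.mem_toFinset.2 h)
      rw [this, Multiset.replicate_zero]
    rw [h2]
    have := Multiset.toFinset_sum_count_nsmul_eq s.1
    simpa [Multiset.nsmul_singleton, Multiset.nsmul_singleton] using this

lemma card_anti (n m : ℕ) : (Finset.Nat.antidiagonalTuple n m).card = (n + m - 1).choose m := by
  letI F : Fintype {f : Fin n → ℕ // ∑ i, f i = m} :=
    Fintype.subtype (Finset.Nat.antidiagonalTuple n m)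
      (fun f => Finset.Nat.mem_antidiagonalTuple)
  have h := @Fintype.card_congr _ _ F _ (tupleEquivSym n m)
  rw [Sym.card_sym_fin_eq_multichoose, Nat.multichoose_eq] at h
  rw [← h]
  exact (Fintype.subtype_card (Finset.Nat.antidiagonalTuple n m)
    (fun f => Finset.Nat.mem_antidiagonalTuple)).symm

lemma exists_trunc {n : ℕ} (f : Fin n → ℕ) :
    ∀ t : ℕ, t ≤ ∑ i, f i → ∃ g : Fin n → ℕ, (∀ i, g i ≤ f i) ∧ ∑ i, g i = t := by
  intro t
  induction t with
  | zero => exact fun _ => ⟨fun _ => 0, fun _ => Nat.zero_le _, by simp⟩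
  | succ t ih =>
    intro ht
    obtain ⟨g, hg, hsum⟩ := ih (Nat.le_of_succ_le ht)
    have : ∃ i, g i < f i := by
      by_contra h
      push_neg at h
      have : ∑ i, f i ≤ ∑ i, g i := Finset.sum_le_sum fun i _ => h i
      omega
    obtain ⟨i, hi⟩ := this
    refine ⟨Function.update g i (g i + 1), fun j => ?_, ?_⟩
    · rcases eq_or_ne j i with rfl | hj
      · simpa using hi
      · simp [Function.update_of_ne hj, hg j]
    · rw [Finset.sum_update_of_mem (Finset.mem_univ i)]
      have := Finset.add_sum_erase Finset.univ g (Finset.mem_univ i)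
      rw [Finset.sum_eq_add_sum_sdiff_singleton_of_mem (Finset.mem_univ i) g] at hsum
      omega

-- support size bound

lemma supp_card {n : ℕ} (A : Fin n → ℕ) :
    (Finset.univ.filter (fun i => A i ≠ 0)).card ≤ ∑ i, A i := by
  calc (Finset.univ.filter (fun i => A i ≠ 0)).card
      = ∑ i ∈ Finset.univ.filter (fun i => A i ≠ 0), 1 := by simp
    _ ≤ ∑ i ∈ Finset.univ.filter (fun i => A i ≠ 0), A i :=
        Finset.sum_le_sum fun i hi => by
          have := (Finset.mem_filter.1 hi).2; omega
    _ ≤ ∑ i, A i := Finset.sum_le_sum_of_subset (Finset.filter_subset _ _)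

-- trivial family bound

lemma trivial_bound {n k t : ℕ} (htk : t ≤ k) (F : Finset (Fin n → ℕ))
    (hsum : ∀ A ∈ F, ∑ i, A i = k)
    (T : Fin n → ℕ) (hT : ∑ i, T i = t) (hTF : ∀ B ∈ F, ∀ i, T i ≤ B i) :
    F.card ≤ (n + k - t - 1).choose (k - t) := by
  have hinj : ∀ B ∈ F, (fun i => B i - T i) ∈ Finset.Nat.antidiagonalTuple n (k - t) := by
    intro B hB
    rw [Finset.Nat.mem_antidiagonalTuple]
    have : ∑ i, (B i - T i) = ∑ i, B i - ∑ i, T i :=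
      Finset.sum_tsub_distrib Finset.univ fun i _ => hTF B hB i
    rw [this, hsum B hB, hT]
  have := Finset.card_le_card_of_injOn (fun (B : Fin n → ℕ) i => B i - T i) hinj ?_
  · calc F.card ≤ (Finset.Nat.antidiagonalTuple n (k - t)).card := this
      _ = (n + (k - t) - 1).choose (k - t) := card_anti n (k - t)
      _ = (n + k - t - 1).choose (k - t) := by congr 1; omega
  · intro B hB B' hB' h
    funext i
    have h1 := hTF B hB i
    have h2 := hTF B' hB' i
    have := congrFun h i
    simp only at this
    omega

lemma greedy_aux {n k t : ℕ} {F : Finset (Fin n → ℕ)}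
    (ht : 1 ≤ t)
    (hnt : ¬ ∃ T : Fin n → ℕ, ∑ i, T i = t ∧ ∀ B ∈ F, ∀ i, T i ≤ B i) :
    ∀ v : ℕ, ∀ G : Finset (Fin n → ℕ), ∀ hG : G.Nonempty, G ⊆ F →
    G.card + v ≤ k + 1 → (∑ i, G.inf' hG (fun B => B i)) = v →
    ∃ G' : Finset (Fin n → ℕ), ∃ hG' : G'.Nonempty, G' ⊆ F ∧ G'.card ≤ k + 1 ∧
      (∑ i, G'.inf' hG' (fun B => B i)) ≤ t - 1 := by
  intro v
  induction v using Nat.strong_induction_on with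
  | _ v ih =>
    intro G hG hGF hcard hv
    by_cases hvt : v ≤ t - 1
    · exact ⟨G, hG, hGF, Nat.le_trans (Nat.le_add_right _ _) hcard,
        le_of_eq_of_le hv hvt⟩
    · have hvt' : t ≤ v := by clear hv; omega
      by_cases hall : ∀ B ∈ F, ∀ i, G.inf' hG (fun A => A i) ≤ B i
      · exfalso
        obtain ⟨T, hT1, hT2⟩ := exists_trunc (fun i => G.inf' hG (fun A => A i)) t
          (le_of_le_of_eq hvt' hv.symm)
        exact hnt ⟨T, hT2, fun B hB i => le_trans (hT1 i) (hall B hB i)⟩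
      · push_neg at hall
        obtain ⟨B, hBF, i₀, hi₀⟩ := hall
        have hBG : B ∉ G := fun h => absurd (Finset.inf'_le (fun A => A i₀) h) (not_le.2 hi₀)
        have hG'ne : (insert B G).Nonempty := Finset.insert_nonempty _ _
        have hMin : ∀ i, (insert B G).inf' hG'ne (fun A => A i)
            = min (B i) (G.inf' hG (fun A => A i)) := by
          intro i
          exact Finset.inf'_insert (H := hG) (f := fun A => A i)
        obtain ⟨v', hv'eq⟩ : ∃ v', (∑ i, (insert B G).inf' hG'ne (fun A => A i)) = v' := ⟨_, rfl⟩
        have hsumlt : (∑ i, (insert B G).inf' hG'ne (fun A => A i))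
            < ∑ i, G.inf' hG (fun A => A i) := by
          apply Finset.sum_lt_sum (fun i _ => by rw [hMin]; exact min_le_right _ _)
          exact ⟨i₀, Finset.mem_univ _, by rw [hMin]; exact min_lt_iff.2 (Or.inl hi₀)⟩
        have hlt : v' < v := by rw [← hv'eq, ← hv]; exact hsumlt
        have hcard' : (insert B G).card + v' ≤ k + 1 := by
          have h1 := Finset.card_insert_le B G
          clear hv'eq hv hMin hsumlt hi₀
          omega
        exact ih v' hlt (insert B G) hG'ne (Finset.insert_subset hBF hGF) hcard' hv'eq

lemma claimC {n t : ℕ} {F G : Finset (Fin n → ℕ)} (ht : 1 ≤ t)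
    (hint : ∀ A ∈ F, ∀ B ∈ F, t ≤ ∑ i, min (A i) (B i))
    (hG : G.Nonempty) (hGF : G ⊆ F)
    (hinf : (∑ i, G.inf' hG (fun A => A i)) ≤ t - 1)
    (S : Finset (Fin n)) (hSdef : ∀ A ∈ G, ∀ i, i ∉ S → A i = 0)
    {B : Fin n → ℕ} (hB : B ∈ F) :
    t + 1 ≤ ∑ i ∈ S, B i := by
  by_contra hcon
  push_neg at hcon
  -- for each A in G, intersection with B equals its restriction to S
  have hrestr : ∀ A ∈ G, (∑ i ∈ S, min (B i) (A i)) = ∑ i, min (B i) (A i) := by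
    intro A hA
    refine Finset.sum_subset (Finset.subset_univ S) ?_
    intro x _ hx
    rw [hSdef A hA x hx]
    simp
  have hkey : ∀ A ∈ G, ∀ i ∈ S, B i ≤ A i := by
    intro A hA
    have h1 : t ≤ ∑ i ∈ S, min (B i) (A i) := by
      rw [hrestr A hA]
      have := hint B hB A (hGF hA)
      simpa [min_comm] using this
    have h2 : ∑ i ∈ S, min (B i) (A i) ≤ ∑ i ∈ S, B i :=
      Finset.sum_le_sum fun i _ => min_le_left _ _
    have hle : ∀ i ∈ S, min (B i) (A i) ≤ B i := fun i _ => min_le_left _ _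
    have heqs : ∑ i ∈ S, min (B i) (A i) = ∑ i ∈ S, B i :=
      le_antisymm h2 (le_trans (Nat.lt_succ_iff.1 hcon) h1)
    intro i hi
    exact min_eq_left_iff.1 ((Finset.sum_eq_sum_iff_of_le hle).1 heqs i hi)
  -- then B ≤ inf on S, contradiction
  obtain ⟨A₀, hA₀⟩ := id hG
  have h1 : t ≤ ∑ i ∈ S, min (B i) (A₀ i) := by
    rw [hrestr A₀ hA₀]
    simpa [min_comm] using hint B hB A₀ (hGF hA₀)
  have h2 : ∑ i ∈ S, min (B i) (A₀ i) ≤ ∑ i ∈ S, B i :=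
    Finset.sum_le_sum fun i _ => min_le_left _ _
  have h3 : ∑ i ∈ S, B i ≤ ∑ i ∈ S, G.inf' hG (fun A => A i) :=
    Finset.sum_le_sum fun i hi => Finset.le_inf' hG _ (fun A hA => hkey A hA i hi)
  have h4 : ∑ i ∈ S, G.inf' hG (fun A => A i) ≤ ∑ i, G.inf' hG (fun A => A i) :=
    Finset.sum_le_sum_of_subset (Finset.subset_univ S)
  have hfin : t ≤ t - 1 := le_trans h1 (le_trans h2 (le_trans h3 (le_trans h4 hinf)))
  clear * - hfin ht
  omega

lemma choose_mono_aux {n : ℕ} (hn : 1 ≤ n) {m m' : ℕ} (h : m ≤ m') :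
    (n + m - 1).choose m ≤ (n + m' - 1).choose m' := by
  induction m', h using Nat.le_induction with
  | base => exact le_rfl
  | succ m' hmm ih =>
    have ha : n + (m' + 1) - 1 = (n + m' - 1) + 1 := by omega
    have hb : m' = (m' - 1) + 1 ∨ m' = 0 := by omega
    rw [ha, Nat.choose_succ_succ]
    exact le_trans ih (Nat.le_add_right _ _)

lemma nontrivial_bound {n k t : ℕ} {F G : Finset (Fin n → ℕ)}
    (ht : 1 ≤ t) (htk : t < k) (hn : 1 ≤ n)
    (hsum : ∀ A ∈ F, ∑ i, A i = k)
    (hint : ∀ A ∈ F, ∀ B ∈ F, t ≤ ∑ i, min (A i) (B i))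
    (hG : G.Nonempty) (hGF : G ⊆ F) (hGcard : G.card ≤ k + 1)
    (hinf : (∑ i, G.inf' hG (fun A => A i)) ≤ t - 1) :
    F.card ≤ (k+1)^(k*(k+1)) * ((k-t) * (n + (k-t-1) - 1).choose (k-t-1)) := by
  classical
  set S : Finset (Fin n) := G.biUnion (fun A => Finset.univ.filter (fun i => A i ≠ 0)) with hS
  have hSdef : ∀ A ∈ G, ∀ i, i ∉ S → A i = 0 := by
    intro A hA i hi
    by_contra h
    exact hi (Finset.mem_biUnion.2 ⟨A, hA, Finset.mem_filter.2 ⟨Finset.mem_univ _, h⟩⟩)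
  have hScard : S.card ≤ (k+1) * k := by
    calc S.card ≤ ∑ A ∈ G, (Finset.univ.filter (fun i => A i ≠ 0)).card :=
          Finset.card_biUnion_le
      _ ≤ ∑ A ∈ G, k := Finset.sum_le_sum fun A hA => by
          rw [← hsum A (hGF hA)]; exact supp_card A
      _ = G.card * k := by rw [Finset.sum_const, smul_eq_mul]
      _ ≤ (k+1) * k := Nat.mul_le_mul_right k hGcard
  have hclaim : ∀ B ∈ F, t + 1 ≤ ∑ i ∈ S, B i :=
    fun B hB => claimC ht hint hG hGF hinf S hSdef hB
  clear hinf
  set P₁ : Finset (Fin n → ℕ) :=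
    Fintype.piFinset (fun i => if i ∈ S then Finset.range (k+1) else ({0} : Finset ℕ)) with hP₁
  set P₂ : Finset (Fin n → ℕ) :=
    (Finset.range (k-t)).biUnion (fun m => Finset.Nat.antidiagonalTuple n m) with hP₂
  have hmap : ∀ B ∈ F,
      ((fun i => if i ∈ S then B i else 0, fun i => if i ∈ S then 0 else B i)
        : (Fin n → ℕ) × (Fin n → ℕ)) ∈ P₁ ×ˢ P₂ := by
    intro B hB
    rw [Finset.mem_product]
    constructor
    · rw [hP₁, Fintype.mem_piFinset]
      intro i
      by_cases hi : i ∈ S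
      · simp only [hi, if_true, Finset.mem_range]
        have : B i ≤ ∑ j, B j := Finset.single_le_sum (fun j _ => Nat.zero_le _) (Finset.mem_univ i)
        rw [hsum B hB] at this
        omega
      · simp [hi]
    · -- second component
      have hsplit : ∑ i ∈ S, B i + ∑ i, (if i ∈ S then 0 else B i) = ∑ i, B i := by
        have h0 := Finset.sum_filter_add_sum_filter_not Finset.univ (fun i => i ∈ S) B
        have h1 : Finset.univ.filter (fun i => i ∈ S) = S := by
          ext x; simp
        have h2 : ∑ i ∈ Finset.univ.filter (fun i => ¬ i ∈ S), B i
            = ∑ i, (if i ∈ S then 0 else B i) := by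
          rw [Finset.sum_filter]
          exact Finset.sum_congr rfl fun i _ => by by_cases h : i ∈ S <;> simp [h]
        rw [h1, h2] at h0
        exact h0
      obtain ⟨s', hs'⟩ : ∃ s', ∑ i ∈ S, B i = s' := ⟨_, rfl⟩
      have hs'k : s' ≤ k := by
        rw [← hs', ← hsum B hB]
        exact Finset.sum_le_sum_of_subset (Finset.subset_univ S)
      have hs't : t + 1 ≤ s' := hs' ▸ hclaim B hB
      rw [hP₂, Finset.mem_biUnion]
      refine ⟨k - s', Finset.mem_range.2 (by clear hs' hsplit; omega), ?_⟩
      rw [Finset.Nat.mem_antidiagonalTuple]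
      rw [hs', hsum B hB] at hsplit
      exact Nat.eq_sub_of_add_eq' hsplit
  have hinj : Set.InjOn (fun (B : Fin n → ℕ) =>
      ((fun i => if i ∈ S then B i else 0, fun i => if i ∈ S then 0 else B i)
        : (Fin n → ℕ) × (Fin n → ℕ))) F := by
    intro B hB B' hB' h
    simp only [Prod.mk.injEq] at h
    funext i
    by_cases hi : i ∈ S
    · have := congrFun h.1 i
      simpa [hi] using this
    · have := congrFun h.2 i
      simpa [hi] using this
  have hcard := Finset.card_le_card_of_injOn _ hmap hinj
  rw [Finset.card_product] at hcard
  have hc1 : P₁.card ≤ (k+1)^(k*(k+1)) := by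
    rw [hP₁, Fintype.card_piFinset]
    have : ∀ i : Fin n, (if i ∈ S then Finset.range (k+1) else ({0} : Finset ℕ)).card
        = if i ∈ S then k+1 else 1 := by
      intro i; by_cases h : i ∈ S <;> simp [h]
    rw [Finset.prod_congr rfl (fun i _ => this i)]
    rw [← Finset.prod_filter (fun i => i ∈ S) (fun _ => k+1)]
    have h1 : Finset.univ.filter (fun i => i ∈ S) = S := by ext x; simp
    rw [h1, Finset.prod_const]
    exact Nat.pow_le_pow_right (Nat.succ_le_succ (Nat.zero_le k)) (mul_comm (k+1) k ▸ hScard)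
  have hc2 : P₂.card ≤ (k-t) * (n + (k-t-1) - 1).choose (k-t-1) := by
    calc P₂.card ≤ ∑ m ∈ Finset.range (k-t), (Finset.Nat.antidiagonalTuple n m).card :=
          Finset.card_biUnion_le
      _ ≤ ∑ m ∈ Finset.range (k-t), (n + (k-t-1) - 1).choose (k-t-1) := by
          refine Finset.sum_le_sum fun m hm => ?_
          rw [card_anti]
          exact choose_mono_aux hn (by have := Finset.mem_range.1 hm; omega)
      _ = (k-t) * (n + (k-t-1) - 1).choose (k-t-1) := by
          rw [Finset.sum_const, Finset.card_range, smul_eq_mul]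
  calc F.card ≤ P₁.card * P₂.card := hcard
    _ ≤ (k+1)^(k*(k+1)) * ((k-t) * (n + (k-t-1) - 1).choose (k-t-1)) :=
        Nat.mul_le_mul hc1 hc2

lemma final_arith {k t n X : ℕ} (ht : 1 ≤ t) (htk : t < k)
    (hn : (k+1)^(k*(k+1)+2) + k + 2 ≤ n)
    (hX : X ≤ (k+1)^(k*(k+1)) * ((k-t) * (n + (k-t-1) - 1).choose (k-t-1))) :
    X ≤ (n + k - t - 1).choose (k - t) := by
  obtain ⟨a, ha, ha1⟩ : ∃ a, k - t = a ∧ 1 ≤ a := ⟨k - t, rfl, by omega⟩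
  have hkn : k + 2 ≤ n := by omega
  have hidx1 : n + (k-t-1) - 1 = n + a - 2 := by omega
  have hidx2 : n + k - t - 1 = n + a - 1 := by omega
  rw [hidx1, ha] at hX
  rw [hidx2, ha]
  have hmc := Nat.add_one_mul_choose_eq (n + a - 2) (a - 1)
  have e1 : (n + a - 2) + 1 = n + a - 1 := by omega
  have e2 : (a - 1) + 1 = a := by omega
  rw [e1, e2] at hmc
  have hp : (k+1)^(k*(k+1)+2) = (k+1)^(k*(k+1)) * (k+1) * (k+1) := by
    rw [pow_succ, pow_succ]
  have h2 : (k+1)^(k*(k+1)) * a * a ≤ (k+1)^(k*(k+1)+2) := by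
    rw [hp]
    exact Nat.mul_le_mul (Nat.mul_le_mul_left _ (by omega)) (by omega)
  have hEa : (k+1)^(k*(k+1)) * a * a ≤ n + a - 1 := by omega
  have hchain : X * a ≤ (n + a - 1).choose a * a := by
    calc X * a ≤ ((k+1)^(k*(k+1)) * (a * (n + a - 2).choose (a-1))) * a :=
          Nat.mul_le_mul_right a hX
      _ = ((k+1)^(k*(k+1)) * a * a) * ((n + a - 2).choose (a-1)) := by ring
      _ ≤ (n + a - 1) * ((n + a - 2).choose (a-1)) :=
          Nat.mul_le_mul_right _ hEa
      _ = (n + a - 1).choose a * a := hmc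
  exact Nat.le_of_mul_le_mul_right hchain (by omega)


/-- For `n` large enough, every t-intersecting family of k-multisets of [n]
has size at most `(n + k - t - 1).choose (k - t)`. -/
theorem EKR_multiset_large_n (k t : ℕ) (ht : 1 ≤ t) (htk : t ≤ k) :
    ∃ n₀ : ℕ, ∀ n : ℕ, n₀ ≤ n → ∀ F : Finset (Fin n → ℕ),
      (∀ A ∈ F, ∑ i, A i = k) →
      (∀ A ∈ F, ∀ B ∈ F, t ≤ ∑ i, min (A i) (B i)) →
      F.card ≤ (n + k - t - 1).choose (k - t) := by
  refine ⟨(k+1)^(k*(k+1)+2) + k + 2, ?_⟩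
  intro n hn F hsum hint
  have hn1 : 1 ≤ n := by omega
  rcases eq_or_lt_of_le htk with rfl | htk'
  · -- case t = k
    have hck : (n + t - t - 1).choose (t - t) = 1 := by
      rw [Nat.sub_self, Nat.choose_zero_right]
    rw [hck]
    have key : ∀ A ∈ F, ∀ B ∈ F, ∀ i, A i ≤ B i := by
      intro A hA B hB
      have h1 := hint A hA B hB
      have h2 : ∑ i, min (A i) (B i) ≤ ∑ i, A i :=
        Finset.sum_le_sum (fun i _ => min_le_left _ _)
      have heq : ∑ i, min (A i) (B i) = ∑ i, A i := by
        refine le_antisymm h2 ?_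
        rw [hsum A hA]
        exact h1
      intro i
      have := (Finset.sum_eq_sum_iff_of_le
        (fun i _ => min_le_left (A i) (B i))).1 heq i (Finset.mem_univ i)
      exact min_eq_left_iff.1 this
    refine Finset.card_le_one.2 ?_
    intro A hA B hB
    exact funext fun i => le_antisymm (key A hA B hB i) (key B hB A hA i)
  · by_cases htriv : ∃ T : Fin n → ℕ, (∑ i, T i = t) ∧ ∀ B ∈ F, ∀ i, T i ≤ B i
    · obtain ⟨T, hT1, hT2⟩ := htriv
      exact trivial_bound htk F hsum T hT1 hT2
    · rcases F.eq_empty_or_nonempty with rfl | ⟨A₁, hA₁⟩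
      · simp
      · have hsing : ({A₁} : Finset (Fin n → ℕ)).Nonempty := Finset.singleton_nonempty _
        have hsum1 : (∑ i, ({A₁} : Finset (Fin n → ℕ)).inf' hsing (fun B => B i)) = k := by
          simp only [Finset.inf'_singleton]
          exact hsum A₁ hA₁
        obtain ⟨G, hGne, hGF, hGcard, hGinf⟩ :=
          greedy_aux (k := k) ht htriv k {A₁} hsing
            (Finset.singleton_subset_iff.2 hA₁)
            (by rw [Finset.card_singleton, Nat.add_comm]) hsum1
        have hb := nontrivial_bound ht htk' hn1 hsum hint hGne hGF hGcard hGinf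
        exact final_arith ht htk' hn hb
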